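/- Let f : ℝ → ℝ be defined (on [−2,2], extended to an element of BUC¹) by f(x) = x² for x ∈ [0,2] and f(x) = x⁴ for x ∈ [−2,0). Then the function g(x) := sup_{|y|≤1} f(x+y) satisfies g(x) = (x+1)² for x ∈ [0,1] and g(x) = (x−1)⁴ for x ∈ [−1,0), and g is differentiable on (−1,0)∪(0,1) with g'(x) = 2(x+1) on (0,1) and g'(x) = 4(x−1)³ on (−1,0); consequently |g'| has a jump at 0 (left limit 4, right limit 2) and is not continuous. -/

import Mathlib

/-- For `f` with `f(x) = x²` on `[0,2]` and `f(x) = x⁴` on `[-2,0)`, the function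
`g(x) = sup_{|y| ≤ 1} f(x+y)` equals `(x+1)²` on `[0,1]` and `(x-1)⁴` on `[-1,0)`, is
differentiable on `(-1,0) ∪ (0,1)` with the stated derivatives, and `|g'|` has a jump at `0`
(right limit `2`, left limit `4`). -/
theorem stmt12 (f : ℝ → ℝ)
    (hf1 : ∀ x ∈ Set.Icc (0 : ℝ) 2, f x = x ^ 2)
    (hf2 : ∀ x ∈ Set.Ico (-2 : ℝ) 0, f x = x ^ 4)
    (g : ℝ → ℝ) (hg : ∀ x, g x = sSup (f '' Set.Icc (x - 1) (x + 1))) :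
    (∀ x ∈ Set.Icc (0 : ℝ) 1, g x = (x + 1) ^ 2) ∧
    (∀ x ∈ Set.Ico (-1 : ℝ) 0, g x = (x - 1) ^ 4) ∧
    (∀ x ∈ Set.Ioo (0 : ℝ) 1, HasDerivAt g (2 * (x + 1)) x) ∧
    (∀ x ∈ Set.Ioo (-1 : ℝ) 0, HasDerivAt g (4 * (x - 1) ^ 3) x) ∧
    Filter.Tendsto (fun x => |deriv g x|) (nhdsWithin 0 (Set.Ioi 0)) (nhds 2) ∧
    Filter.Tendsto (fun x => |deriv g x|) (nhdsWithin 0 (Set.Iio 0)) (nhds 4) := by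
  have hA : ∀ x ∈ Set.Icc (0 : ℝ) 1, g x = (x + 1) ^ 2 := by
    intro x hx
    rw [hg x]
    apply IsGreatest.csSup_eq
    constructor
    · refine ⟨x + 1, ⟨by linarith, le_refl _⟩, ?_⟩
      rw [hf1 (x + 1) ⟨by linarith [hx.1], by linarith [hx.2]⟩]
    · rintro _ ⟨t, ht, rfl⟩
      rcases le_or_gt 0 t with h0 | h0
      · rw [hf1 t ⟨h0, by linarith [ht.2, hx.2]⟩]
        nlinarith [ht.2, hx.1, hx.2]
      · rw [hf2 t ⟨by linarith [ht.1, hx.1], h0⟩]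
        have h1 : -t ≤ 1 := by linarith [ht.1, hx.1]
        have h2 : (-t) ^ 4 ≤ 1 ^ 4 := pow_le_pow_left₀ (by linarith) h1 4
        nlinarith [hx.1]
  have hB : ∀ x ∈ Set.Ico (-1 : ℝ) 0, g x = (x - 1) ^ 4 := by
    intro x hx
    rw [hg x]
    apply IsGreatest.csSup_eq
    constructor
    · refine ⟨x - 1, ⟨le_refl _, by linarith⟩, ?_⟩
      rw [hf2 (x - 1) ⟨by linarith [hx.1], by linarith [hx.2]⟩]
    · rintro _ ⟨t, ht, rfl⟩
      rcases le_or_gt 0 t with h0 | h0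
      · rw [hf1 t ⟨h0, by linarith [ht.2, hx.2]⟩]
        have h1 : t ≤ (x - 1) ^ 2 := by nlinarith [ht.2, hx.1, hx.2]
        calc t ^ 2 ≤ ((x - 1) ^ 2) ^ 2 := pow_le_pow_left₀ h0 h1 2
          _ = (x - 1) ^ 4 := by ring
      · rw [hf2 t ⟨by linarith [ht.1, hx.1], h0⟩]
        have h1 : -t ≤ -(x - 1) := by linarith [ht.1]
        have h2 : (-t) ^ 4 ≤ (-(x - 1)) ^ 4 := pow_le_pow_left₀ (by linarith) h1 4
        calc t ^ 4 = (-t) ^ 4 := by ring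
          _ ≤ (-(x - 1)) ^ 4 := h2
          _ = (x - 1) ^ 4 := by ring
  have hC : ∀ x ∈ Set.Ioo (0 : ℝ) 1, HasDerivAt g (2 * (x + 1)) x := by
    intro x hx
    have h1 : HasDerivAt (fun y : ℝ => (y + 1) ^ 2) (2 * (x + 1)) x := by
      have := ((hasDerivAt_id x).add_const 1).pow 2
      simpa [Pi.pow_def] using this
    apply h1.congr_of_eventuallyEq
    filter_upwards [isOpen_Ioo.mem_nhds hx] with y hy
    exact hA y ⟨hy.1.le, hy.2.le⟩
  have hD : ∀ x ∈ Set.Ioo (-1 : ℝ) 0, HasDerivAt g (4 * (x - 1) ^ 3) x := by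
    intro x hx
    have h1 : HasDerivAt (fun y : ℝ => (y - 1) ^ 4) (4 * (x - 1) ^ 3) x := by
      have := ((hasDerivAt_id x).sub_const 1).pow 4
      simpa [Pi.pow_def] using this
    apply h1.congr_of_eventuallyEq
    filter_upwards [isOpen_Ioo.mem_nhds hx] with y hy
    exact hB y ⟨hy.1.le, hy.2⟩
  refine ⟨hA, hB, hC, hD, ?_, ?_⟩
  · have h1 : Filter.Tendsto (fun x : ℝ => |2 * (x + 1)|) (nhdsWithin 0 (Set.Ioi 0)) (nhds 2) := by
      have hc : Continuous fun x : ℝ => |2 * (x + 1)| := by continuity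
      have := (hc.tendsto 0).mono_left (nhdsWithin_le_nhds (s := Set.Ioi 0))
      simpa using this
    apply h1.congr'
    filter_upwards [Ioo_mem_nhdsGT_of_mem (Set.left_mem_Ico.2 one_pos)] with x hx
    rw [(hC x hx).deriv]
  · have h1 : Filter.Tendsto (fun x : ℝ => |4 * (x - 1) ^ 3|) (nhdsWithin 0 (Set.Iio 0)) (nhds 4) := by
      have hc : Continuous fun x : ℝ => |4 * (x - 1) ^ 3| := by continuity
      have := (hc.tendsto 0).mono_left (nhdsWithin_le_nhds (s := Set.Iio 0))
      norm_num at this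
      convert this using 2
      rw [abs_mul, abs_pow, abs_of_pos (by norm_num : (0:ℝ) < 4)]
    apply h1.congr'
    filter_upwards [Ioo_mem_nhdsLT_of_mem (Set.right_mem_Ioc.2 (by norm_num : (-1:ℝ) < 0))] with x hx
    rw [(hD x hx).deriv]
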